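/- For the Euclidean Kerr instanton with parameters μ > 0 and α, with r₊ = μ + √(μ² + α²), Ω = α/(r₊² - α²), β = 4π r₊ (r₊² - α²)/(r₊² + α²), mass m = μ, angular momentum j = -αμ, bolt area A = β·(r₊² + α²)/r₊, and charge Q_χ = 2β α (r₊² + α²)/r₊², the Smarr relation m - 2Ωj = A/(2β) and the angular momentum relation j = -Q_χ/(16π) hold. -/

import Mathlib

/-- Smarr-type identities for the Euclidean Kerr instanton: with `r₊ = μ + √(μ²+α²)`,
`Ω = α/(r₊²-α²)`, `β = 4πr₊(r₊²-α²)/(r₊²+α²)`, `m = μ`, `j = -αμ`,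
`A = β(r₊²+α²)/r₊`, `Q_χ = 2βα(r₊²+α²)/r₊²`, one has
`m - 2Ωj = A/(2β)` and `j = -Q_χ/(16π)`. -/
theorem stmt18 (μ α r Ω β m j A Q : ℝ) (hμ : 0 < μ)
    (hr : r = μ + Real.sqrt (μ ^ 2 + α ^ 2))
    (hΩ : Ω = α / (r ^ 2 - α ^ 2))
    (hβ : β = 4 * Real.pi * r * (r ^ 2 - α ^ 2) / (r ^ 2 + α ^ 2))
    (hm : m = μ) (hj : j = -(α * μ))
    (hA : A = β * (r ^ 2 + α ^ 2) / r)
    (hQ : Q = 2 * β * α * (r ^ 2 + α ^ 2) / r ^ 2) :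
    m - 2 * Ω * j = A / (2 * β) ∧ j = -(Q / (16 * Real.pi)) := by
  have hs : Real.sqrt (μ ^ 2 + α ^ 2) ^ 2 = μ ^ 2 + α ^ 2 :=
    Real.sq_sqrt (by positivity)
  have hsnn : 0 ≤ Real.sqrt (μ ^ 2 + α ^ 2) := Real.sqrt_nonneg _
  have hrpos : 0 < r := by rw [hr]; linarith
  have hkey : r ^ 2 - α ^ 2 = 2 * μ * r := by
    rw [hr]; nlinarith [hs]
  have h1 : r ^ 2 - α ^ 2 ≠ 0 := by rw [hkey]; positivity
  have h2 : r ^ 2 + α ^ 2 ≠ 0 := by positivity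
  have hπ : Real.pi ≠ 0 := Real.pi_ne_zero
  have hβpos : β ≠ 0 := by
    rw [hβ, hkey]
    have : (0:ℝ) < 4 * Real.pi * r * (2 * μ * r) / (r ^ 2 + α ^ 2) := by
      have := Real.pi_pos; positivity
    linarith
  subst hΩ hβ hm hj hA hQ
  have hr0 : r ≠ 0 := ne_of_gt hrpos
  rw [hkey] at hβpos ⊢
  constructor
  · field_simp
    linear_combination (-1 : ℝ) * hkey
  · field_simp
    ring
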